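/- For every real μ with 0 ≤ μ ≤ 1/2, setting x = 1/2 + log₂(3)·(μ − 1/4), the following inequality holds: (1 − μ)·h( (x − μ)/(1 − μ) ) − (1/2)·h(2x − 2μ) ≤ 1 − h(1/4). -/

import Mathlib

open Real Set

/-- Binary entropy function (base-2 logarithm). Note `Real.logb 2 0 = 0`,
so `binH 0 = binH 1 = 0` automatically. -/
noncomputable def binH (x : ℝ) : ℝ := -x * Real.logb 2 x - (1 - x) * Real.logb 2 (1 - x)

noncomputable def cc : ℝ := Real.logb 2 3

lemma log2_pos : (0:ℝ) < Real.log 2 := Real.log_pos (by norm_num)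

lemma cc_logs : cc * Real.log 2 = Real.log 3 := by
  unfold cc; rw [Real.logb]; field_simp

lemma cc_lb : 19/12 ≤ cc := by
  have h : Real.log ((2:ℝ)^(19:ℕ)) < Real.log ((3:ℝ)^(12:ℕ)) :=
    Real.log_lt_log (by positivity) (by norm_num)
  rw [Real.log_pow, Real.log_pow] at h
  unfold cc; rw [Real.logb, le_div_iff₀ log2_pos]
  push_cast at h; nlinarith

lemma cc_ub : cc ≤ 27/17 := by
  have h : Real.log ((3:ℝ)^(17:ℕ)) < Real.log ((2:ℝ)^(27:ℕ)) :=
    Real.log_lt_log (by positivity) (by norm_num)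
  rw [Real.log_pow, Real.log_pow] at h
  unfold cc; rw [Real.logb, div_le_iff₀ log2_pos]
  push_cast at h; nlinarith

noncomputable def G (μ : ℝ) : ℝ :=
  ((cc-1)*μ + 1/2 - cc/4) * Real.log 2 + (1-μ) * Real.log (1-μ)
  - (1/2 + cc/4 - cc*μ) * Real.log (1/2 + cc/4 - cc*μ)
  + (cc/4 - (cc-1)*μ) * Real.log (cc/2 - 2*(cc-1)*μ)

noncomputable def Gd (μ : ℝ) : ℝ :=
  (cc-1)*Real.log 2 - Real.log (1-μ) + cc*Real.log (1/2 + cc/4 - cc*μ)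
  - (cc-1)*Real.log (cc/2 - 2*(cc-1)*μ)

noncomputable def Gdd (μ : ℝ) : ℝ :=
  1/(1-μ) - cc^2/(1/2 + cc/4 - cc*μ) + 2*(cc-1)^2/(cc/2 - 2*(cc-1)*μ)

lemma pos1 {μ : ℝ} (h1 : μ ≤ 1/2) : 0 < 1 - μ := by linarith
lemma pos2 {μ : ℝ} (h1 : μ ≤ 1/2) : 0 < 1/2 + cc/4 - cc*μ := by
  have := cc_lb; have := cc_ub; nlinarith
lemma pos3 {μ : ℝ} (h0 : 0 ≤ μ) (h1 : μ ≤ 1/2) : 0 < cc/2 - 2*(cc-1)*μ := by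
  have := cc_lb; have := cc_ub; nlinarith

lemma hasDerivAt_lin (a b x : ℝ) : HasDerivAt (fun y : ℝ => a + b*y) b x := by
  simpa using ((hasDerivAt_id x).const_mul b).const_add a

lemma hasDerivAt_xlogx (a b : ℝ) {x : ℝ} (h : 0 < a + b*x) :
    HasDerivAt (fun y => (a + b*y) * Real.log (a + b*y))
      (b * Real.log (a + b*x) + b) x := by
  have h1 := hasDerivAt_lin a b x
  have h2 := h1.mul (h1.log h.ne')
  refine h2.congr_deriv ?_
  have := h.ne'
  field_simp

lemma hasDerivAt_G {μ : ℝ} (h0 : 0 ≤ μ) (h1 : μ ≤ 1/2) : HasDerivAt G (Gd μ) μ := by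
  have e : G = fun y => ((1/2 - cc/4) + (cc-1)*y) * Real.log 2
      + ((1 + (-1)*y) * Real.log (1 + (-1)*y))
      - (((1/2+cc/4) + (-cc)*y) * Real.log ((1/2+cc/4) + (-cc)*y))
      + (1/2) * ((cc/2 + (-(2*(cc-1)))*y) * Real.log (cc/2 + (-(2*(cc-1)))*y)) := by
    funext y; unfold G; ring_nf
  have A := (hasDerivAt_lin (1/2 - cc/4) (cc-1) μ).mul_const (Real.log 2)
  have B := hasDerivAt_xlogx 1 (-1) (x := μ) (show (0:ℝ) < 1 + (-1)*μ by linarith [pos1 h1])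
  have C := hasDerivAt_xlogx (1/2+cc/4) (-cc) (x := μ)
    (show (0:ℝ) < (1/2+cc/4) + (-cc)*μ by linarith [pos2 h1])
  have D := (hasDerivAt_xlogx (cc/2) (-(2*(cc-1))) (x := μ)
    (show (0:ℝ) < cc/2 + (-(2*(cc-1)))*μ by linarith [pos3 h0 h1])).const_mul (1/2 : ℝ)
  rw [e]
  refine (((A.add B).sub C).add D).congr_deriv ?_
  unfold Gd; ring_nf

lemma hasDerivAt_Gd {μ : ℝ} (h0 : 0 ≤ μ) (h1 : μ ≤ 1/2) : HasDerivAt Gd (Gdd μ) μ := by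
  have n1 : (1:ℝ) + (-1)*μ ≠ 0 := by have := pos1 h1; intro h; linarith [h]
  have n2 : (1/2+cc/4) + (-cc)*μ ≠ 0 := by have := pos2 h1; intro h; nlinarith [h]
  have n3 : cc/2 + (-(2*(cc-1)))*μ ≠ 0 := by have := pos3 h0 h1; intro h; nlinarith [h]
  have e : Gd = fun y => ((cc-1)*Real.log 2 - Real.log (1 + (-1)*y))
      + cc * Real.log ((1/2+cc/4) + (-cc)*y)
      - (cc-1) * Real.log (cc/2 + (-(2*(cc-1)))*y) := by
    funext y; unfold Gd; ring_nf
  have B := (hasDerivAt_lin 1 (-1) μ).log n1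
  have C := ((hasDerivAt_lin (1/2+cc/4) (-cc) μ).log n2).const_mul cc
  have D := ((hasDerivAt_lin (cc/2) (-(2*(cc-1))) μ).log n3).const_mul (cc-1)
  have A := (hasDerivAt_const μ ((cc-1)*Real.log 2)).sub B
  rw [e]
  refine ((A.add C).sub D).congr_deriv ?_
  rw [show (1:ℝ)+(-1)*μ = 1-μ by ring,
      show (1:ℝ)/2+cc/4+(-cc)*μ = 1/2+cc/4-cc*μ by ring,
      show cc/2+(-(2*(cc-1)))*μ = cc/2-2*(cc-1)*μ by ring]
  have q1 := (pos1 h1).ne'; have q2 := (pos2 h1).ne'; have q3 := (pos3 h0 h1).ne'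
  unfold Gdd
  field_simp
  ring

lemma Gd_quarter : Gd (1/4) = 0 := by
  unfold Gd
  rw [show (1:ℝ)/2 + cc/4 - cc*(1/4) = 1/2 by ring,
      show cc/2 - 2*(cc-1)*(1/4) = 1/2 by ring,
      show (1:ℝ) - 1/4 = 3/4 by norm_num,
      show (1:ℝ)/2 = 2⁻¹ by norm_num, Real.log_inv,
      show (3:ℝ)/4 = 3/4 from rfl]
  have l34 : Real.log (3/4 : ℝ) = Real.log 3 - 2 * Real.log 2 := by
    rw [Real.log_div (by norm_num) (by norm_num), show (4:ℝ) = 2^(2:ℕ) by norm_num,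
        Real.log_pow]
    push_cast; ring
  rw [l34]
  linear_combination cc_logs

lemma poly_key (c μ : ℝ) (hc1 : 19/12 ≤ c) (hc2 : c ≤ 27/17) (h0 : 0 ≤ μ) (h1 : μ ≤ 1/2) :
    0 < c^2*(1-μ)*(c/2-2*(c-1)*μ) - (1/2+c/4-c*μ)*(c/2-2*(c-1)*μ)
      - 2*(c-1)^2*(1-μ)*(1/2+c/4-c*μ) := by
  nlinarith [mul_nonneg h0 (sub_nonneg.2 h1), sq_nonneg (μ-1/4), sq_nonneg (c-19/12),
    sq_nonneg (27/17-c), mul_nonneg (sub_nonneg.2 hc1) (sub_nonneg.2 hc2), sq_nonneg μ,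
    mul_nonneg (mul_nonneg h0 h0) (sub_nonneg.2 hc1)]

lemma Gdd_neg {μ : ℝ} (h0 : 0 ≤ μ) (h1 : μ ≤ 1/2) : Gdd μ < 0 := by
  have hA := pos1 h1; have hB := pos2 h1; have hC := pos3 h0 h1
  have key := poly_key cc μ cc_lb cc_ub h0 h1
  have q1 := hA.ne'; have q2 := hB.ne'; have q3 := hC.ne'
  have hD : 0 < (1-μ)*(1/2+cc/4-cc*μ)*(cc/2-2*(cc-1)*μ) := by positivity
  have frac : ∀ a b u v w : ℝ, u ≠ 0 → v ≠ 0 → w ≠ 0 →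
      (1/u - a/v + b/w) * (u*v*w) = -(a*u*w - v*w - b*u*v) := by
    intro a b u v w hu hv hw; field_simp; ring
  have hmul : Gdd μ * ((1-μ)*(1/2+cc/4-cc*μ)*(cc/2-2*(cc-1)*μ))
      = -(cc^2*(1-μ)*(cc/2-2*(cc-1)*μ) - (1/2+cc/4-cc*μ)*(cc/2-2*(cc-1)*μ)
      - 2*(cc-1)^2*(1-μ)*(1/2+cc/4-cc*μ)) := by
    have := frac (cc^2) (2*(cc-1)^2) (1-μ) (1/2+cc/4-cc*μ) (cc/2-2*(cc-1)*μ) q1 q2 q3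
    unfold Gdd
    rw [this]
  by_contra hcon
  push_neg at hcon
  nlinarith [mul_nonneg hcon hD.le]

lemma Gd_anti : StrictAntiOn Gd (Icc 0 (1/2)) := by
  apply strictAntiOn_of_deriv_neg (convex_Icc 0 (1/2))
  · exact fun x hx => (hasDerivAt_Gd hx.1 hx.2).continuousAt.continuousWithinAt
  · intro x hx
    rw [interior_Icc] at hx
    rw [(hasDerivAt_Gd hx.1.le hx.2.le).deriv]
    exact Gdd_neg hx.1.le hx.2.le

lemma G_le {μ : ℝ} (h0 : 0 ≤ μ) (h1 : μ ≤ 1/2) : G μ ≤ G (1/4) := by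
  rcases le_or_gt μ (1/4) with h | h
  · have mono : MonotoneOn G (Icc 0 (1/4)) := by
      apply monotoneOn_of_deriv_nonneg (convex_Icc 0 (1/4))
      · exact fun x hx => (hasDerivAt_G hx.1 (by linarith [hx.2])).continuousAt.continuousWithinAt
      · intro x hx
        rw [interior_Icc] at hx
        exact (hasDerivAt_G hx.1.le (by linarith [hx.2])).differentiableAt.differentiableWithinAt
      · intro x hx
        rw [interior_Icc] at hx
        rw [(hasDerivAt_G hx.1.le (by linarith [hx.2])).deriv]
        have := Gd_anti (Set.mem_Icc.2 ⟨hx.1.le, by linarith [hx.2]⟩)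
          (Set.mem_Icc.2 ⟨by norm_num, by norm_num⟩) hx.2
        rw [Gd_quarter] at this
        linarith
    exact mono (Set.mem_Icc.2 ⟨h0, h⟩) (Set.mem_Icc.2 ⟨by norm_num, le_refl _⟩) h
  · have anti : AntitoneOn G (Icc (1/4) (1/2)) := by
      apply antitoneOn_of_deriv_nonpos (convex_Icc (1/4) (1/2))
      · exact fun x hx => (hasDerivAt_G (by linarith [hx.1]) hx.2).continuousAt.continuousWithinAt
      · intro x hx
        rw [interior_Icc] at hx
        exact (hasDerivAt_G (by linarith [hx.1]) hx.2.le).differentiableAt.differentiableWithinAt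
      · intro x hx
        rw [interior_Icc] at hx
        rw [(hasDerivAt_G (by linarith [hx.1]) hx.2.le).deriv]
        have := Gd_anti (Set.mem_Icc.2 ⟨by norm_num, by norm_num⟩)
          (Set.mem_Icc.2 ⟨by linarith [hx.1], hx.2.le⟩) hx.1
        rw [Gd_quarter] at this
        linarith
    exact anti (Set.mem_Icc.2 ⟨by norm_num, by norm_num⟩) (Set.mem_Icc.2 ⟨h.le, h1⟩) h.le

lemma G_quarter : G (1/4) = (3/4)*Real.log 3 - Real.log 2 := by
  unfold G
  rw [show (1:ℝ)/2 + cc/4 - cc*(1/4) = 1/2 by ring,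
      show cc/2 - 2*(cc-1)*(1/4) = 1/2 by ring,
      show (1:ℝ) - 1/4 = 3/4 by norm_num,
      show (1:ℝ)/2 = 2⁻¹ by norm_num, Real.log_inv]
  have l34 : Real.log (3/4 : ℝ) = Real.log 3 - 2 * Real.log 2 := by
    rw [Real.log_div (by norm_num) (by norm_num), show (4:ℝ) = 2^(2:ℕ) by norm_num,
        Real.log_pow]
    push_cast; ring
  rw [l34]; ring

lemma rhs_val : (1 - binH (1/4)) * Real.log 2 = (3/4)*Real.log 3 - Real.log 2 := by
  unfold binH
  rw [show (1:ℝ) - 1/4 = 3/4 by norm_num]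
  rw [Real.logb, Real.logb]
  have l14 : Real.log (1/4 : ℝ) = -(2 * Real.log 2) := by
    rw [show (1:ℝ)/4 = (2^(2:ℕ))⁻¹ by norm_num, Real.log_inv, Real.log_pow]
    push_cast; ring
  have l34 : Real.log (3/4 : ℝ) = Real.log 3 - 2 * Real.log 2 := by
    rw [Real.log_div (by norm_num) (by norm_num), show (4:ℝ) = 2^(2:ℕ) by norm_num,
        Real.log_pow]
    push_cast; ring
  rw [l14, l34]
  field_simp
  ring

lemma glue {μ : ℝ} (h0 : 0 ≤ μ) (h1 : μ ≤ 1/2) :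
    ((1 - μ) * binH (((1 / 2 + cc * (μ - 1 / 4)) - μ) / (1 - μ))
      - (1 / 2) * binH (2 * (1 / 2 + cc * (μ - 1 / 4)) - 2 * μ)) * Real.log 2 = G μ := by
  have p1 := pos1 h1; have p2 := pos2 h1; have p3 := pos3 h0 h1
  have pt : 0 < 1/2 - cc/4 + (cc-1)*μ := by
    have := cc_lb; have := cc_ub; nlinarith
  unfold binH
  rw [show (1/2 + cc * (μ - 1/4)) - μ = 1/2 - cc/4 + (cc-1)*μ by ring]
  rw [show 2 * (1/2 + cc * (μ - 1/4)) - 2*μ = 2 * (1/2 - cc/4 + (cc-1)*μ) by ring]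
  rw [show (1:ℝ) - (1/2 - cc/4 + (cc-1)*μ) / (1 - μ)
      = (1/2 + cc/4 - cc*μ) / (1 - μ) from by field_simp; ring]
  rw [show (1:ℝ) - 2 * (1/2 - cc/4 + (cc-1)*μ) = cc/2 - 2*(cc-1)*μ by ring]
  rw [Real.logb, Real.logb, Real.logb, Real.logb]
  rw [Real.log_div pt.ne' p1.ne', Real.log_div p2.ne' p1.ne',
      Real.log_mul (by norm_num) pt.ne']
  unfold G
  field_simp
  ring

theorem f1_bound (μ : ℝ) (hμ0 : 0 ≤ μ) (hμ1 : μ ≤ 1 / 2) :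
    (1 - μ) * binH (((1 / 2 + Real.logb 2 3 * (μ - 1 / 4)) - μ) / (1 - μ))
      - (1 / 2) * binH (2 * (1 / 2 + Real.logb 2 3 * (μ - 1 / 4)) - 2 * μ)
      ≤ 1 - binH (1 / 4) := by
  rw [show Real.logb 2 3 = cc from rfl]
  rw [← mul_le_mul_iff_left₀ log2_pos]
  rw [glue hμ0 hμ1, rhs_val, ← G_quarter]
  exact G_le hμ0 hμ1
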